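/- Let A_G̃ ∈ ℝ^{n×n} be the adjacency matrix of a graph G̃ and let B ∈ ℝ^{(m+1)×(m+1)} be the all-ones matrix. Let G* be the graph with adjacency matrix A_{G*} = A_G̃ ⊗ B (Kronecker product). Then the maximum degree of G* equals (m+1) times the maximum degree of G̃, and the second smallest eigenvalue of the normalized Laplacian of G* satisfies σ_min(I − D_{G*}^{−1/2} A_{G*} D_{G*}^{−1/2}) ≥ min{σ_min(I − D_G̃^{−1/2} A_G̃ D_G̃^{−1/2}), 1}, where σ_min denotes the smallest nonzero eigenvalue. -/

import Mathlib

open Matrix Kronecker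

lemma matrix_mem_spectrum_iff {ι : Type*} [Fintype ι] [DecidableEq ι]
    (M : Matrix ι ι ℝ) (x : ℝ) :
    x ∈ spectrum ℝ M ↔ ∃ v : ι → ℝ, v ≠ 0 ∧ M *ᵥ v = x • v := by
  rw [← AlgEquiv.spectrum_eq (Matrix.toLinAlgEquiv' (R := ℝ) (n := ι)) M,
    ← Module.End.hasEigenvalue_iff_mem_spectrum, Module.End.hasEigenvalue_iff,
    Submodule.ne_bot_iff]
  constructor
  · rintro ⟨v, hv, hv0⟩
    exact ⟨v, hv0, by simpa [Module.End.mem_eigenspace_iff, Matrix.toLinAlgEquiv'_apply] using hv⟩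
  · rintro ⟨v, hv0, hv⟩
    exact ⟨v, by simpa [Module.End.mem_eigenspace_iff, Matrix.toLinAlgEquiv'_apply] using hv, hv0⟩


/-- Claim 5.4 (properties of G*): with A* = A_G̃ ⊗ B (B the all-ones (m+1)×(m+1)
matrix), the maximum degree of G* is (m+1) times the maximum degree of G̃, and the
smallest nonzero eigenvalue of the normalized Laplacian of G* is at least
min{smallest nonzero eigenvalue of the normalized Laplacian of G̃, 1}. -/
theorem kronecker_graph_properties {n m : ℕ} (hn : 0 < n)
    (At : Matrix (Fin n) (Fin n) ℝ)
    (hsym : At.IsSymm) (h01 : ∀ i j, At i j = 0 ∨ At i j = 1)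
    (hdiag : ∀ i, At i i = 0)
    (hdeg : ∀ i, 0 < ∑ j, At i j)
    (Bmat : Matrix (Fin (m + 1)) (Fin (m + 1)) ℝ) (hB : ∀ a b, Bmat a b = 1)
    (σt σstar : ℝ)
    (hσt : IsLeast {x | x ≠ 0 ∧ x ∈ spectrum ℝ
        ((1 : Matrix (Fin n) (Fin n) ℝ) -
          Matrix.diagonal (fun i => 1 / Real.sqrt (∑ j, At i j)) * At *
          Matrix.diagonal (fun i => 1 / Real.sqrt (∑ j, At i j)))} σt)
    (hσstar : IsLeast {x | x ≠ 0 ∧ x ∈ spectrum ℝ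
        ((1 : Matrix (Fin n × Fin (m + 1)) (Fin n × Fin (m + 1)) ℝ) -
          Matrix.diagonal (fun i => 1 / Real.sqrt (∑ j, (At ⊗ₖ Bmat) i j)) *
            (At ⊗ₖ Bmat) *
          Matrix.diagonal (fun i => 1 / Real.sqrt (∑ j, (At ⊗ₖ Bmat) i j)))} σstar) :
    (⨆ i : Fin n × Fin (m + 1), ∑ j, (At ⊗ₖ Bmat) i j)
        = (m + 1) * ⨆ i, ∑ j, At i j
    ∧ min σt 1 ≤ σstar := by
  have hnne : Nonempty (Fin n) := ⟨⟨0, hn⟩⟩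
  set d : Fin n → ℝ := fun i => ∑ j, At i j with hd
  have hm1 : (0:ℝ) ≤ (m:ℝ) + 1 := by positivity
  have hrow : ∀ p : Fin n × Fin (m+1), ∑ j, (At ⊗ₖ Bmat) p j = ((m:ℝ)+1) * d p.1 := by
    intro p
    rw [Fintype.sum_prod_type]
    simp only [Matrix.kroneckerMap_apply, hB, mul_one, Finset.sum_const, Finset.card_univ,
      Fintype.card_fin, nsmul_eq_mul, ← Finset.mul_sum]
    push_cast
    ring
  have h1 : (⨆ i : Fin n × Fin (m + 1), ∑ j, (At ⊗ₖ Bmat) i j)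
      = ((m:ℝ) + 1) * ⨆ i, ∑ j, At i j := by
    rw [Real.mul_iSup_of_nonneg hm1]
    apply le_antisymm
    · refine ciSup_le fun p => ?_
      rw [hrow]
      exact le_ciSup (f := fun i : Fin n => ((m:ℝ)+1) * ∑ j, At i j)
        ((Set.finite_range _).bddAbove) p.1
    · refine ciSup_le fun i => ?_
      have := hrow ((i, 0) : Fin n × Fin (m+1))
      rw [← this]
      exact le_ciSup (f := fun p : Fin n × Fin (m+1) => ∑ j, (At ⊗ₖ Bmat) p j)
        ((Set.finite_range _).bddAbove) ((i, 0) : Fin n × Fin (m+1))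
  refine ⟨h1, ?_⟩
  by_cases hs1 : σstar = 1
  · rw [hs1]; exact min_le_right _ _
  obtain ⟨hs0, hspec⟩ := hσstar.1
  rw [matrix_mem_spectrum_iff] at hspec
  obtain ⟨v, hv0, hv⟩ := hspec
  set lam := 1 - σstar with hlam
  have hlam0 : lam ≠ 0 := sub_ne_zero.mpr (Ne.symm hs1)
  set f : Fin n × Fin (m+1) → ℝ :=
    fun p => 1 / Real.sqrt (∑ j, (At ⊗ₖ Bmat) p j) with hfdef
  set g : Fin n → ℝ := fun i => 1 / Real.sqrt (d i) with hgdef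
  have hAv : (Matrix.diagonal f * (At ⊗ₖ Bmat) * Matrix.diagonal f) *ᵥ v = lam • v := by
    rw [Matrix.sub_mulVec, Matrix.one_mulVec] at hv
    rw [hlam, sub_smul, one_smul, ← hv]
    abel
  have hfg : ∀ p : Fin n × Fin (m+1), f p = (1 / Real.sqrt ((m:ℝ)+1)) * g p.1 := by
    intro p
    rw [hfdef]
    simp only
    rw [hrow, Real.sqrt_mul hm1, hgdef]
    simp only [one_div, mul_inv]
  have hsq : Real.sqrt ((m:ℝ)+1) * Real.sqrt ((m:ℝ)+1) = (m:ℝ)+1 :=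
    Real.mul_self_sqrt hm1
  have hc2 : (1 / Real.sqrt ((m:ℝ)+1)) * (1 / Real.sqrt ((m:ℝ)+1)) = 1 / ((m:ℝ)+1) := by
    rw [div_mul_div_comm, one_mul, hsq]
  have key : ∀ p : Fin n × Fin (m+1),
      lam * v p = (1/((m:ℝ)+1)) * g p.1 *
        ∑ j, At p.1 j * g j * ∑ b, v (j, b) := by
    intro p
    have h := congrFun hAv p
    rw [← Matrix.mulVec_mulVec, ← Matrix.mulVec_mulVec, Matrix.mulVec_diagonal] at h
    simp only [Pi.smul_apply, smul_eq_mul] at h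
    have hexp : ((At ⊗ₖ Bmat) *ᵥ (Matrix.diagonal f *ᵥ v)) p
        = ∑ j, ∑ b, At p.1 j * (f (j,b) * v (j,b)) := by
      rw [Matrix.mulVec, dotProduct, Fintype.sum_prod_type]
      refine Finset.sum_congr rfl fun j _ => Finset.sum_congr rfl fun b _ => ?_
      rw [Matrix.mulVec_diagonal, Matrix.kroneckerMap_apply, hB, mul_one]
    rw [hexp] at h
    rw [← h, hfg p]
    have hfb : ∀ (j : Fin n) (b : Fin (m+1)),
        f (j, b) = (1 / Real.sqrt ((m:ℝ)+1)) * g j := fun j b => hfg (j, b)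
    simp only [hfb, Finset.mul_sum]
    refine Finset.sum_congr rfl fun j _ => Finset.sum_congr rfl fun b _ => ?_
    linear_combination (g p.1 * At p.1 j * g j * v (j, b)) * hc2
  have hconst : ∀ (i : Fin n) (a : Fin (m+1)), v (i, a) = v (i, 0) := by
    intro i a
    have h1' := key (i, a)
    have h2' := key (i, 0)
    exact mul_left_cancel₀ hlam0 (h1'.trans h2'.symm)
  set w : Fin n → ℝ := fun i => v (i, 0) with hw
  have hw0 : w ≠ 0 := by
    intro hcontra
    apply hv0
    funext p
    simp only [Pi.zero_apply]
    calc v p = v (p.1, p.2) := by rw [Prod.mk.eta]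
    _ = v (p.1, 0) := hconst p.1 p.2
    _ = 0 := congrFun hcontra p.1
  have hsumb : ∀ j : Fin n, ∑ b, v (j, b) = ((m:ℝ)+1) * w j := by
    intro j
    rw [Finset.sum_congr rfl fun b _ => hconst j b]
    simp [Finset.sum_const, Finset.card_univ, nsmul_eq_mul]
    exact Or.inl rfl
  have hm0 : ((m:ℝ)+1) ≠ 0 := by positivity
  have hNw : (Matrix.diagonal g * At * Matrix.diagonal g) *ᵥ w = lam • w := by
    funext i
    rw [← Matrix.mulVec_mulVec, ← Matrix.mulVec_mulVec, Matrix.mulVec_diagonal]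
    have hmid : (At *ᵥ (Matrix.diagonal g *ᵥ w)) i = ∑ j, At i j * (g j * w j) := by
      rw [Matrix.mulVec, dotProduct]
      refine Finset.sum_congr rfl fun j _ => ?_
      rw [Matrix.mulVec_diagonal]
    rw [hmid]
    simp only [Pi.smul_apply, smul_eq_mul]
    have hwi : w i = v (i, 0) := rfl
    rw [hwi, key (i, 0)]
    simp only [hsumb, Finset.mul_sum]
    refine Finset.sum_congr rfl fun j _ => ?_
    field_simp
  have hmem : σstar ∈ {x | x ≠ 0 ∧ x ∈ spectrum ℝ
      ((1 : Matrix (Fin n) (Fin n) ℝ) -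
        Matrix.diagonal (fun i => 1 / Real.sqrt (∑ j, At i j)) * At *
        Matrix.diagonal (fun i => 1 / Real.sqrt (∑ j, At i j)))} := by
    refine ⟨hs0, ?_⟩
    rw [matrix_mem_spectrum_iff]
    refine ⟨w, hw0, ?_⟩
    rw [Matrix.sub_mulVec, Matrix.one_mulVec]
    have heq : (Matrix.diagonal (fun i => 1 / Real.sqrt (∑ j, At i j)) * At *
        Matrix.diagonal (fun i => 1 / Real.sqrt (∑ j, At i j)))
        = Matrix.diagonal g * At * Matrix.diagonal g := rfl
    rw [heq, hNw, hlam]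
    funext i
    simp only [Pi.sub_apply, Pi.smul_apply, smul_eq_mul]
    ring
  calc min σt 1 ≤ σt := min_le_left _ _
  _ ≤ σstar := hσt.2 hmem
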